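/- Let A ∈ ℝ^{n×n} be symmetric positive semidefinite and let ω > 0 satisfy ω⟨Ax, x⟩ ≤ ‖x‖² for all x (i.e., the spectral radius of ωA is at most 1). Set S = I − ω·A. Then for every positive integer ν and every u ∈ ℝ^n, the A-norm of the smoothed vector satisfies ‖Sᵛu‖_A² = ⟨A Sᵛu, Sᵛu⟩ ≤ ‖u‖² / (ω(2ν + 1)). -/

import Mathlib

open Matrix

private lemma aux_scalar_12 (t : ℝ) (ht0 : 0 ≤ t) (ht1 : t ≤ 1) (ν : ℕ) :
    t * (1 - t) ^ (2 * ν) ≤ 1 / (2 * ν + 1) := by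
  have hm1 : (0:ℝ) < 2 * ν + 1 := by positivity
  rw [le_div_iff₀ hm1]
  have hpow0 : (0:ℝ) ≤ (1 - t) ^ (2 * ν) := Even.pow_nonneg (even_two_mul ν) _
  have hb : (1:ℝ) + (2 * ν) * t ≤ (1 + t) ^ (2 * ν) := by
    have := one_add_mul_le_pow (a := t) (by linarith) (2 * ν)
    simpa using this
  have hc : ((1 - t) * (1 + t)) ^ (2 * ν) ≤ 1 := by
    apply pow_le_one₀ (by nlinarith) (by nlinarith)
  have hd : (1 - t) ^ (2 * ν) * (1 + t) ^ (2 * ν) ≤ 1 := by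
    rwa [← mul_pow]
  have h1 : t * (2 * ν + 1) ≤ 1 + (2 * ν) * t := by nlinarith
  calc t * (1 - t) ^ (2 * ν) * (2 * ν + 1)
      = (1 - t) ^ (2 * ν) * (t * (2 * ν + 1)) := by ring
    _ ≤ (1 - t) ^ (2 * ν) * (1 + (2 * ν) * t) :=
        mul_le_mul_of_nonneg_left h1 hpow0
    _ ≤ (1 - t) ^ (2 * ν) * (1 + t) ^ (2 * ν) :=
        mul_le_mul_of_nonneg_left hb hpow0
    _ ≤ 1 := hd

/-- Smoothing property of the Richardson smoother `S = I - ω A`: if `A` is symmetric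
positive semidefinite and `ω > 0` satisfies `ω ⟨A x, x⟩ ≤ ‖x‖²` for all `x`, then for
every positive integer `ν` and every `u`, `‖Sᵛ u‖_A² ≤ ‖u‖² / (ω (2ν + 1))`. -/
theorem stmt_12 {n : ℕ} (A : Matrix (Fin n) (Fin n) ℝ) (hA : A.PosSemidef)
    (ω : ℝ) (hω : 0 < ω) (hspec : ∀ x : Fin n → ℝ, ω * ((A *ᵥ x) ⬝ᵥ x) ≤ x ⬝ᵥ x)
    (S : Matrix (Fin n) (Fin n) ℝ) (hS : S = 1 - ω • A) :
    ∀ ν : ℕ, 0 < ν → ∀ u : Fin n → ℝ,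
      (A *ᵥ ((S ^ ν) *ᵥ u)) ⬝ᵥ ((S ^ ν) *ᵥ u) ≤ (u ⬝ᵥ u) / (ω * (2 * ν + 1)) := by
  intro ν hν u
  have hH := hA.1
  set U : Matrix (Fin n) (Fin n) ℝ := (hH.eigenvectorUnitary : Matrix (Fin n) (Fin n) ℝ)
    with hUdef
  have hU1 : U * star U = 1 := (Matrix.mem_unitaryGroup_iff).mp hH.eigenvectorUnitary.2
  have hU2 : star U * U = 1 := (Matrix.mem_unitaryGroup_iff').mp hH.eigenvectorUnitary.2
  set lam := hH.eigenvalues with hlam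
  have hAeq : A = U * diagonal lam * star U := by
    have := hH.spectral_theorem
    simpa [Function.comp] using this
  have hstar : star U = Uᵀ := by
    ext i j; simp [Matrix.star_apply]
  have key_dot : ∀ (V : Matrix (Fin n) (Fin n) ℝ), Vᵀ * V = 1 →
      ∀ a b : Fin n → ℝ, (V *ᵥ a) ⬝ᵥ (V *ᵥ b) = a ⬝ᵥ b := by
    intro V hV a b
    rw [dotProduct_mulVec, ← mulVec_transpose, mulVec_mulVec, hV, one_mulVec]
  have hUdot : ∀ a b : Fin n → ℝ, (U *ᵥ a) ⬝ᵥ (U *ᵥ b) = a ⬝ᵥ b :=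
    key_dot U (by rw [← hstar, hU2])
  have hVdot : ∀ a b : Fin n → ℝ, (star U *ᵥ a) ⬝ᵥ (star U *ᵥ b) = a ⬝ᵥ b :=
    key_dot (star U) (by rw [hstar, transpose_transpose, ← hstar, hU1])
  -- eigenvalue bounds
  have hlam0 : ∀ i, 0 ≤ lam i := fun i => hA.eigenvalues_nonneg i
  have hlam1 : ∀ i, ω * lam i ≤ 1 := by
    intro i
    have h := hspec (U *ᵥ Pi.single i 1)
    have hx : A *ᵥ (U *ᵥ Pi.single i 1) = U *ᵥ Pi.single i (lam i) := by
      rw [hAeq, ← mulVec_mulVec, ← mulVec_mulVec, mulVec_mulVec (Pi.single i 1) (star U) U,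
        hU2, one_mulVec, diagonal_mulVec_single, mul_one]
    simp only [hx, hUdot] at h
    simpa [single_dotProduct, Pi.single_apply] using h
  -- powers of conjugated diagonal matrices
  have hkey : ∀ (d : Fin n → ℝ) (k : ℕ),
      (U * diagonal d * star U) ^ k = U * diagonal (fun i => d i ^ k) * star U := by
    intro d k
    induction k with
    | zero => simp [hU1]
    | succ k ih =>
        rw [pow_succ, ih]
        have h2 : (U * diagonal (fun i => d i ^ k) * star U) * (U * diagonal d * star U)
            = U * (diagonal (fun i => d i ^ k) * diagonal d) * star U := by
          rw [mul_assoc (U * diagonal (fun i => d i ^ k)) (star U),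
            ← mul_assoc (star U) (U * diagonal d) (star U),
            ← mul_assoc (star U) U (diagonal d), hU2, one_mul, ← mul_assoc, ← mul_assoc]
        rw [h2, diagonal_mul_diagonal]
        simp only [pow_succ]
  have hSeq : S = U * diagonal (fun i => 1 - ω * lam i) * star U := by
    have hdg : diagonal (fun i => 1 - ω * lam i)
        = (1 : Matrix (Fin n) (Fin n) ℝ) - ω • diagonal lam := by
      rw [← diagonal_one, ← diagonal_smul, ← diagonal_sub]
      rfl
    rw [hS, hAeq, hdg, Matrix.mul_sub, Matrix.sub_mul, Matrix.mul_one, hU1,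
      Matrix.mul_smul, Matrix.smul_mul, mul_assoc]
  have hSpow : S ^ ν = U * diagonal (fun i => (1 - ω * lam i) ^ ν) * star U := by
    rw [hSeq, hkey]
  set w : Fin n → ℝ := star U *ᵥ u with hw
  set μ : Fin n → ℝ := fun i => (1 - ω * lam i) ^ ν with hμ
  have hSu : (S ^ ν) *ᵥ u = U *ᵥ (diagonal μ *ᵥ w) := by
    rw [hSpow, ← mulVec_mulVec, ← mulVec_mulVec]
  have hASu : A *ᵥ ((S ^ ν) *ᵥ u) = U *ᵥ (diagonal lam *ᵥ (diagonal μ *ᵥ w)) := by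
    rw [hSu, hAeq, ← mulVec_mulVec, ← mulVec_mulVec,
      mulVec_mulVec (diagonal μ *ᵥ w) (star U) U, hU2, one_mulVec]
  have hLHS : (A *ᵥ ((S ^ ν) *ᵥ u)) ⬝ᵥ ((S ^ ν) *ᵥ u)
      = ∑ i, lam i * μ i ^ 2 * w i ^ 2 := by
    rw [hASu, hSu, hUdot]
    simp only [dotProduct, mulVec_diagonal]
    exact Finset.sum_congr rfl (fun i _ => by ring)
  have hRHS : u ⬝ᵥ u = ∑ i, w i ^ 2 := by
    rw [← hVdot u u, ← hw]
    simp [dotProduct, sq]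
  rw [hLHS, hRHS, Finset.sum_div]
  apply Finset.sum_le_sum
  intro i _
  have ht0 : 0 ≤ ω * lam i := mul_nonneg hω.le (hlam0 i)
  have haux := aux_scalar_12 (ω * lam i) ht0 (hlam1 i) ν
  have hμ2 : μ i ^ 2 = (1 - ω * lam i) ^ (2 * ν) := by
    rw [hμ, ← pow_mul, mul_comm ν 2]
  have hbound : lam i * μ i ^ 2 ≤ 1 / (ω * (2 * ν + 1)) := by
    rw [hμ2]
    have h := mul_le_mul_of_nonneg_left haux (le_of_lt (inv_pos.mpr hω))
    have heq : ω⁻¹ * (ω * lam i * (1 - ω * lam i) ^ (2 * ν))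
        = lam i * (1 - ω * lam i) ^ (2 * ν) := by
      field_simp
    have heq2 : ω⁻¹ * (1 / (2 * ν + 1)) = 1 / (ω * (2 * ν + 1)) := by
      field_simp
    rw [heq, heq2] at h
    exact h
  calc lam i * μ i ^ 2 * w i ^ 2 ≤ (1 / (ω * (2 * ν + 1))) * w i ^ 2 :=
        mul_le_mul_of_nonneg_right hbound (sq_nonneg _)
    _ = w i ^ 2 / (ω * (2 * ν + 1)) := by ring
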